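/- Let τ and τ' be points of the complex upper half-plane and suppose there exists a nonzero complex number λ such that λ·(ℤ + ℤτ') = ℤ + ℤτ as additive subgroups of ℂ. Then there exist integers a, b, c, d with ad − bc = 1 such that τ' = (aτ+b)/(cτ+d). -/

import Mathlib

/-- Linear independence of `1, τ` over `ℤ` when `im τ ≠ 0`. -/
lemma int_indep_of_im_ne {τ : ℂ} (hτ : τ.im ≠ 0) {m n m' n' : ℤ}
    (h : (m : ℂ) * τ + n = (m' : ℂ) * τ + n') : m = m' ∧ n = n' := by
  have him : (m : ℝ) * τ.im = (m' : ℝ) * τ.im := by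
    have := congrArg Complex.im h
    simpa using this
  have hm : (m : ℝ) = m' := mul_right_cancel₀ hτ him
  have hm' : m = m' := by exact_mod_cast hm
  subst hm'
  have hn : (n : ℂ) = n' := by linear_combination h
  exact ⟨rfl, by exact_mod_cast hn⟩

/-- If `τ, τ'` are in the upper half-plane and there is a nonzero `λ ∈ ℂ` with
`λ · (ℤ + ℤτ') = ℤ + ℤτ` (as additive subgroups of `ℂ`), then there are integers
`a, b, c, d` with `ad - bc = 1` and `τ' = (aτ + b)/(cτ + d)`. -/
theorem moebius_of_lattices_homothetic (τ τ' : ℂ) (hτ : 0 < τ.im) (hτ' : 0 < τ'.im)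
    (lam : ℂ) (hlam : lam ≠ 0)
    (h : AddSubgroup.closure {lam, lam * τ'} = AddSubgroup.closure {(1 : ℂ), τ}) :
    ∃ a b c d : ℤ, a * d - b * c = 1 ∧
      τ' = ((a : ℂ) * τ + b) / ((c : ℂ) * τ + d) := by
  have hτne : τ.im ≠ 0 := ne_of_gt hτ
  have h1 : lam * τ' ∈ AddSubgroup.closure ({(1 : ℂ), τ} : Set ℂ) := by
    rw [← h]; exact AddSubgroup.subset_closure (by simp)
  have h2 : lam ∈ AddSubgroup.closure ({(1 : ℂ), τ} : Set ℂ) := by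
    rw [← h]; exact AddSubgroup.subset_closure (by simp)
  rw [AddSubgroup.mem_closure_pair] at h1 h2
  obtain ⟨b, a, hab⟩ := h1
  obtain ⟨d, c, hcd⟩ := h2
  have h3 : (1 : ℂ) ∈ AddSubgroup.closure ({lam, lam * τ'} : Set ℂ) := by
    rw [h]; exact AddSubgroup.subset_closure (by simp)
  have h4 : τ ∈ AddSubgroup.closure ({lam, lam * τ'} : Set ℂ) := by
    rw [h]; exact AddSubgroup.subset_closure (by simp)
  rw [AddSubgroup.mem_closure_pair] at h3 h4
  obtain ⟨p, q, hpq⟩ := h3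
  obtain ⟨r, s, hrs⟩ := h4
  simp only [zsmul_eq_mul] at hab hcd hpq hrs
  -- λτ' = aτ + b, λ = cτ + d
  have hab' : lam * τ' = (a : ℂ) * τ + b := by linear_combination -hab
  have hcd' : lam = (c : ℂ) * τ + d := by linear_combination -hcd
  -- independence relations
  have e1 : ((p * c + q * a : ℤ) : ℂ) * τ + ((p * d + q * b : ℤ) : ℂ)
      = ((0 : ℤ) : ℂ) * τ + ((1 : ℤ) : ℂ) := by
    push_cast
    linear_combination hpq - p * hcd' - q * hab'
  have e2 : ((r * c + s * a : ℤ) : ℂ) * τ + ((r * d + s * b : ℤ) : ℂ)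
      = ((1 : ℤ) : ℂ) * τ + ((0 : ℤ) : ℂ) := by
    push_cast
    linear_combination hrs - r * hcd' - s * hab'
  obtain ⟨e11, e12⟩ := int_indep_of_im_ne hτne e1
  obtain ⟨e21, e22⟩ := int_indep_of_im_ne hτne e2
  -- determinant is a unit
  have hdet : (a * d - b * c) * (p * s - q * r) = 1 := by nlinarith [e11, e12, e21, e22]
  have hunit : a * d - b * c = 1 ∨ a * d - b * c = -1 := by
    have := Int.isUnit_iff.mp (IsUnit.of_mul_eq_one _ hdet)
    exact this
  -- imaginary part computation
  have key : lam * τ' = (c : ℂ) * τ * τ' + (d : ℂ) * τ' := by rw [hcd']; ring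
  have him : (((c : ℝ) * τ.re + d) ^ 2 + ((c : ℝ) * τ.im) ^ 2) * τ'.im
      = ((a : ℝ) * d - b * c) * τ.im := by
    have hre := congrArg Complex.re (key.symm.trans hab')
    have him' := congrArg Complex.im (key.symm.trans hab')
    simp [Complex.mul_re, Complex.mul_im] at hre him'
    linear_combination ((c : ℝ) * τ.re + d) * him' - ((c : ℝ) * τ.im) * hre
  have hdet1 : a * d - b * c = 1 := by
    rcases hunit with h1 | h1
    · exact h1
    · exfalso
      have h1' : ((a : ℝ) * d - b * c) = -1 := by exact_mod_cast h1
      rw [h1'] at him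
      nlinarith [sq_nonneg ((c : ℝ) * τ.re + d), sq_nonneg ((c : ℝ) * τ.im), hτ, hτ']
  refine ⟨a, b, c, d, hdet1, ?_⟩
  have hlne : (c : ℂ) * τ + d ≠ 0 := hcd' ▸ hlam
  rw [eq_div_iff hlne]
  linear_combination hab' - τ' * hcd'
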